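/- Let ‖·‖₁ denote the induced matrix 1-norm ‖M‖₁ = max_j Σ_i |M_{ij}|. Then D_comp(A, B) computed with ‖·‖ = ‖·‖₁ equals the optimal value of the following linear program in the variables (W(1), …, W(T)) ∈ (ℝ^{m×m})^T, (e_1, …, e_{T−1}) ∈ ℝ^{T−1}, and (h(1), …, h(T−1)) ∈ (ℝ^{m×m})^{T−1}: minimize Σ_{t=1}^{T−1} e_t + Σ_{t=1}^{T} tr(W(t)ᵀ D^{AB}(t)) subject to, for all admissible indices i, j, t: W(t) has nonnegative entries with all row sums and column sums equal to 1; W(t+1)_{ij} − W(t)_{ij} ≤ h(t)_{ij}; −W(t+1)_{ij} + W(t)_{ij} ≤ h(t)_{ij}; and Σ_i h(t)_{ij} ≤ e_t for all j, t. -/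

import Mathlib

open scoped Matrix

/-- The extended distance `d⁺` on `X⁺ = X ∪ {*}`, modeled as `Option X`. -/
noncomputable def dplus {X : Type*} [MetricSpace X] (M : ℝ) : Option X → Option X → ℝ
  | some a, some b => min (2 * M) (dist a b)
  | some _, none => M
  | none, some _ => M
  | none, none => 0

/-- `𝒫`: the set of `m × m` doubly stochastic real matrices. -/
def doublyStoch (m : ℕ) : Set (Matrix (Fin m) (Fin m) ℝ) :=
  {W | (∀ i j, 0 ≤ W i j) ∧ (∀ i, ∑ j, W i j = 1) ∧ (∀ j, ∑ i, W i j = 1)}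

/-- The pairwise-distance matrix `D^{AB}(t)_{ij} = d⁺(A_i(t), B_j(t))`. -/
noncomputable def distMat {X : Type*} [MetricSpace X] (M : ℝ) {m T : ℕ}
    (A B : Fin m → Fin T → Option X) (t : Fin T) : Matrix (Fin m) (Fin m) ℝ :=
  Matrix.of fun i j => dplus M (A i t) (B j t)

/-- The natural computable distance `D_comp(A, B)` with matrix norm `N`. -/
noncomputable def Dcomp {X : Type*} [MetricSpace X] (M : ℝ) {m T : ℕ}
    (N : Matrix (Fin m) (Fin m) ℝ → ℝ) (A B : Fin m → Fin T → Option X) : ℝ :=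
  sInf {v | ∃ W : Fin T → Matrix (Fin m) (Fin m) ℝ, (∀ t, W t ∈ doublyStoch m) ∧
    v = (∑ t : Fin (T - 1),
          N (W ⟨t.1 + 1, by have := t.2; omega⟩ - W ⟨t.1, by have := t.2; omega⟩)) +
        ∑ t, Matrix.trace ((W t)ᵀ * distMat M A B t)}

/-- The induced matrix 1-norm `‖A‖₁ = max_j ∑_i |A_{ij}|`. -/
noncomputable def oneNorm {m : ℕ} (A : Matrix (Fin m) (Fin m) ℝ) : ℝ :=
  ⨆ j : Fin m, ∑ i, |A i j|

private lemma dplus_nonneg' {X : Type*} [MetricSpace X] {M : ℝ} (hM : 0 ≤ M) :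
    ∀ a b : Option X, 0 ≤ dplus M a b
  | some a, some b => le_min (by linarith) dist_nonneg
  | some _, none => hM
  | none, some _ => hM
  | none, none => le_refl 0

private lemma sum_abs_le_oneNorm {m : ℕ} [Nonempty (Fin m)]
    (A : Matrix (Fin m) (Fin m) ℝ) (j : Fin m) : ∑ i, |A i j| ≤ oneNorm A := by
  rw [oneNorm]
  exact le_ciSup (f := fun j => ∑ i, |A i j|) (Set.Finite.bddAbove (Set.finite_range _)) j

/-- `D_comp` computed with the matrix 1-norm equals the optimal value of the linear
program in the variables `(W(t))_t`, `(e_t)_t`, `(h(t))_t`: minimize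
`∑_t e_t + ∑_t tr(W(t)ᵀ D^{AB}(t))` subject to `W(t)` doubly stochastic,
`W(t+1)_{ij} − W(t)_{ij} ≤ h(t)_{ij}`, `−W(t+1)_{ij} + W(t)_{ij} ≤ h(t)_{ij}` and
`∑_i h(t)_{ij} ≤ e_t`. -/
theorem Dcomp_oneNorm_eq_LP {X : Type*} [MetricSpace X] (M : ℝ) (hM : 0 < M)
    {m T : ℕ} (hm : 1 ≤ m) (hT : 1 ≤ T)
    (A B : Fin m → Fin T → Option X) :
    Dcomp M oneNorm A B =
      sInf {v | ∃ (W : Fin T → Matrix (Fin m) (Fin m) ℝ)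
        (e : Fin (T - 1) → ℝ) (h : Fin (T - 1) → Matrix (Fin m) (Fin m) ℝ),
        (∀ t, W t ∈ doublyStoch m) ∧
        (∀ (t : Fin (T - 1)) (i j : Fin m),
          W ⟨t.1 + 1, by have := t.2; omega⟩ i j - W ⟨t.1, by have := t.2; omega⟩ i j
            ≤ h t i j) ∧
        (∀ (t : Fin (T - 1)) (i j : Fin m),
          -(W ⟨t.1 + 1, by have := t.2; omega⟩ i j) + W ⟨t.1, by have := t.2; omega⟩ i j
            ≤ h t i j) ∧
        (∀ (t : Fin (T - 1)) (j : Fin m), ∑ i, h t i j ≤ e t) ∧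
        v = (∑ t, e t) + ∑ t, Matrix.trace ((W t)ᵀ * distMat M A B t)} := by
  classical
  haveI : Nonempty (Fin m) := ⟨⟨0, hm⟩⟩
  rw [Dcomp]
  set S1 : Set ℝ := {v | ∃ W : Fin T → Matrix (Fin m) (Fin m) ℝ,
    (∀ t, W t ∈ doublyStoch m) ∧
    v = (∑ t : Fin (T - 1),
          oneNorm (W ⟨t.1 + 1, by have := t.2; omega⟩ - W ⟨t.1, by have := t.2; omega⟩)) +
        ∑ t, Matrix.trace ((W t)ᵀ * distMat M A B t)} with hS1
  set S2 : Set ℝ := {v | ∃ (W : Fin T → Matrix (Fin m) (Fin m) ℝ)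
        (e : Fin (T - 1) → ℝ) (h : Fin (T - 1) → Matrix (Fin m) (Fin m) ℝ),
        (∀ t, W t ∈ doublyStoch m) ∧
        (∀ (t : Fin (T - 1)) (i j : Fin m),
          W ⟨t.1 + 1, by have := t.2; omega⟩ i j - W ⟨t.1, by have := t.2; omega⟩ i j
            ≤ h t i j) ∧
        (∀ (t : Fin (T - 1)) (i j : Fin m),
          -(W ⟨t.1 + 1, by have := t.2; omega⟩ i j) + W ⟨t.1, by have := t.2; omega⟩ i j
            ≤ h t i j) ∧
        (∀ (t : Fin (T - 1)) (j : Fin m), ∑ i, h t i j ≤ e t) ∧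
        v = (∑ t, e t) + ∑ t, Matrix.trace ((W t)ᵀ * distMat M A B t)} with hS2
  -- trace nonnegativity
  have traceNN : ∀ (W : Matrix (Fin m) (Fin m) ℝ), W ∈ doublyStoch m → ∀ t : Fin T,
      0 ≤ Matrix.trace (Wᵀ * distMat M A B t) := by
    intro W hW t
    rw [Matrix.trace]
    apply Finset.sum_nonneg
    intro j _
    rw [Matrix.diag_apply, Matrix.mul_apply]
    apply Finset.sum_nonneg
    intro i _
    exact mul_nonneg (hW.1 i j) (dplus_nonneg' hM.le _ _)
  -- subset: S1 ⊆ S2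
  have hsub : S1 ⊆ S2 := by
    rintro v ⟨W, hW, rfl⟩
    refine ⟨W, fun t => oneNorm (W ⟨t.1 + 1, by have := t.2; omega⟩ - W ⟨t.1, by have := t.2; omega⟩),
      fun t => Matrix.of fun i j =>
        |(W ⟨t.1 + 1, by have := t.2; omega⟩ - W ⟨t.1, by have := t.2; omega⟩) i j|,
      hW, ?_, ?_, ?_, rfl⟩
    · intro t i j
      simpa [Matrix.sub_apply] using
        le_abs_self ((W ⟨t.1 + 1, by have := t.2; omega⟩ - W ⟨t.1, by have := t.2; omega⟩) i j)
    · intro t i j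
      have := neg_abs_le ((W ⟨t.1 + 1, by have := t.2; omega⟩ - W ⟨t.1, by have := t.2; omega⟩) i j)
      simp only [Matrix.sub_apply] at this ⊢
      simp only [Matrix.of_apply, Matrix.sub_apply]
      linarith
    · intro t j
      exact sum_abs_le_oneNorm _ j
  -- S1 nonempty
  have hne1 : S1.Nonempty := by
    refine ⟨_, fun _ => Matrix.of fun _ _ => (m : ℝ)⁻¹, fun t => ?_, rfl⟩
    have hm0 : (m : ℝ) ≠ 0 := Nat.cast_ne_zero.2 (by omega)
    refine ⟨fun i j => by simp only [Matrix.of_apply]; positivity, fun i => ?_, fun j => ?_⟩ <;>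
      simp [Finset.sum_const, mul_inv_cancel₀ hm0]
  -- S2 bounded below by 0
  have hbdd2 : ∀ v ∈ S2, (0:ℝ) ≤ v := by
    rintro v ⟨W, e, h, hW, h1, h2, h3, rfl⟩
    have he : ∀ t, 0 ≤ e t := by
      intro t
      have hj : ∀ i j, 0 ≤ h t i j := fun i j => by
        have := h1 t i j; have := h2 t i j; linarith
      calc (0:ℝ) ≤ ∑ i, h t i (Classical.arbitrary (Fin m)) :=
            Finset.sum_nonneg fun i _ => hj i _
        _ ≤ e t := h3 t _
    have := Finset.sum_nonneg (fun t (_ : t ∈ Finset.univ) => he t)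
    have := Finset.sum_nonneg (fun t (_ : t ∈ (Finset.univ : Finset (Fin T))) =>
      traceNN (W t) (hW t) t)
    linarith
  have hbdd2' : BddBelow S2 := ⟨0, fun v hv => hbdd2 v hv⟩
  have hbdd1' : BddBelow S1 := ⟨0, fun v hv => hbdd2 v (hsub hv)⟩
  apply le_antisymm
  · -- sInf S1 ≤ sInf S2
    apply le_csInf ⟨_, hsub hne1.choose_spec⟩
    rintro v ⟨W, e, h, hW, h1, h2, h3, rfl⟩
    have hmem : ((∑ t : Fin (T - 1),
          oneNorm (W ⟨t.1 + 1, by have := t.2; omega⟩ - W ⟨t.1, by have := t.2; omega⟩)) +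
        ∑ t, Matrix.trace ((W t)ᵀ * distMat M A B t)) ∈ S1 := ⟨W, hW, rfl⟩
    refine le_trans (csInf_le hbdd1' hmem) ?_
    apply add_le_add_left
    apply Finset.sum_le_sum
    intro t _
    apply ciSup_le
    intro j
    refine le_trans (Finset.sum_le_sum fun i _ => ?_) (h3 t j)
    rw [Matrix.sub_apply]
    exact abs_le.2 ⟨by have := h2 t i j; linarith, h1 t i j⟩
  · exact csInf_le_csInf hbdd2' hne1 hsub
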